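/- arXiv:2602.20996 — 4 statements merged into one kernel-verified Lean document; each statement's English description precedes it below -/
import Mathlib

section
/- Let V be a finite set, R a binary relation on V (viewed as a directed graph on V), and G a finite group. Then the following are equivalent: (1) there exists a group homomorphism φ : G → Perm(V) whose action is free (i.e. φ(g)(v) = v for some v ∈ V implies g = 1) and preserves R (i.e. for all g ∈ G and u, v ∈ V, R(φ(g)(u), φ(g)(v)) holds iff R(u, v) holds); (2) there exist a finite set W, a G-voltage family Ã : G → (W → W → Prop), and a bijection e : V ≃ W × G such that for all u, v ∈ V, R(u, v) holds iff Ã((e(u)₂)⁻¹ · e(v)₂)(e(u)₁, e(v)₁) holds, i.e. e carries R to the derived relation of Ã on W × G. -/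
/-- **Classical Gross–Tucker theorem.** A directed graph (relation) `R` on a finite
set `V` admits a free `R`-preserving action of a finite group `G` if and only if it is
isomorphic to the derived graph of a `G`-voltage family on some finite set `W`, where
the derived relation on `W × G` relates `(w, h)` to `(w', k)` iff `A (h⁻¹ * k) w w'`. -/
theorem gross_tucker_classical {V : Type} [Fintype V] (R : V → V → Prop)
    (G : Type) [Group G] [Fintype G] :
    (∃ φ : G →* Equiv.Perm V,
        (∀ (g : G) (v : V), φ g v = v → g = 1) ∧
        (∀ (g : G) (u v : V), R (φ g u) (φ g v) ↔ R u v)) ↔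
    (∃ (W : Type) (_ : Fintype W) (A : G → W → W → Prop) (e : V ≃ W × G),
        ∀ u v : V, R u v ↔ A ((e u).2⁻¹ * (e v).2) (e u).1 (e v).1) := by
  classical
  constructor
  · rintro ⟨φ, hfree, hpres⟩
    -- cancellation from freeness
    have hcanc : ∀ (a b : G) (x : V), φ a x = φ b x → a = b := by
      intro a b x h
      have : φ (b⁻¹ * a) x = x := by
        rw [map_mul, Equiv.Perm.mul_apply, h, ← Equiv.Perm.mul_apply, ← map_mul]
        simp
      exact (inv_mul_eq_one.mp (hfree _ _ this)).symm
    let s : Setoid V :=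
      ⟨fun u v => ∃ g : G, φ g u = v,
        ⟨fun u => ⟨1, by simp⟩,
         fun {u v} h => by
           obtain ⟨g, hg⟩ := h
           exact ⟨g⁻¹, by rw [← hg, ← Equiv.Perm.mul_apply, ← map_mul]; simp⟩,
         fun {u v w} h1 h2 => by
           obtain ⟨g, hg⟩ := h1
           obtain ⟨k, hk⟩ := h2
           exact ⟨k * g, by rw [map_mul, Equiv.Perm.mul_apply, hg, hk]⟩⟩⟩
    let W := Quotient s
    have hsurj : Function.Surjective (Quotient.mk s) := Quotient.exists_rep
    haveI := Classical.decEq W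
    have hFW : Fintype W := Fintype.ofSurjective _ hsurj
    have key : ∀ v : V, ∃ g : G, φ g (Quotient.out (Quotient.mk s v)) = v :=
      fun v => Quotient.mk_out v
    let σ : V → G := fun v => Classical.choose (key v)
    have hσ : ∀ v : V, φ (σ v) (Quotient.out (Quotient.mk s v)) = v :=
      fun v => Classical.choose_spec (key v)
    have mkeq : ∀ (g : G) (w : W), Quotient.mk s (φ g (Quotient.out w)) = w := by
      intro g w
      have : Quotient.mk s (Quotient.out w) = w := Quotient.out_eq w
      rw [← this]
      exact Quotient.sound ⟨g⁻¹, by rw [← Equiv.Perm.mul_apply, ← map_mul]; simp⟩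
    let e : V ≃ W × G :=
      { toFun := fun v => (Quotient.mk s v, σ v)
        invFun := fun p => φ p.2 (Quotient.out p.1)
        left_inv := fun v => hσ v
        right_inv := by
          rintro ⟨w, g⟩
          have h1 : Quotient.mk s (φ g (Quotient.out w)) = w := mkeq g w
          have h2 : σ (φ g (Quotient.out w)) = g := by
            apply hcanc _ _ (Quotient.out w)
            have := hσ (φ g (Quotient.out w))
            rwa [h1] at this
          simp [h1, h2] }
    refine ⟨W, hFW, fun a w w' => R (Quotient.out w) (φ a (Quotient.out w')), e, ?_⟩
    intro u v
    show R u v ↔ R (Quotient.out (Quotient.mk s u)) (φ ((σ u)⁻¹ * σ v) (Quotient.out (Quotient.mk s v)))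
    have hu : Quotient.out (Quotient.mk s u) = φ (σ u)⁻¹ u := by
      rw [← hσ u, ← Equiv.Perm.mul_apply, ← map_mul]
      simp [hσ u]
    have hv : φ ((σ u)⁻¹ * σ v) (Quotient.out (Quotient.mk s v)) = φ (σ u)⁻¹ v := by
      rw [map_mul, Equiv.Perm.mul_apply, hσ v]
    rw [hu, hv, hpres]
  · rintro ⟨W, _, A, e, he⟩
    let π : G → Equiv.Perm V := fun g =>
      e.trans (((Equiv.refl W).prodCongr (Equiv.mulLeft g)).trans e.symm)
    have hπ : ∀ (g : G) (v : V), π g v = e.symm ((e v).1, g * (e v).2) := by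
      intro g v; rfl
    have heπ : ∀ (g : G) (v : V), e (π g v) = ((e v).1, g * (e v).2) := by
      intro g v; rw [hπ]; simp
    refine ⟨MonoidHom.mk' π ?_, ?_, ?_⟩
    · intro a b
      ext v
      simp only [Equiv.Perm.mul_apply, hπ]
      simp [mul_assoc]
    · intro g v h
      have h' : π g v = v := h
      have he' := congrArg e h'
      rw [heπ] at he'
      have h2 : g * (e v).2 = (e v).2 := congrArg Prod.snd he'
      exact mul_right_cancel (h2.trans (one_mul _).symm)
    · intro g u v
      show R (π g u) (π g v) ↔ R u v
      rw [he (π g u) (π g v), heπ, heπ]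
      show A ((g * (e u).2)⁻¹ * (g * (e v).2)) (e u).1 (e v).1 ↔ R u v
      have hg : (g * (e u).2)⁻¹ * (g * (e v).2) = (e u).2⁻¹ * (e v).2 := by group
      rw [hg, ← he]
end

section
/- Let V be a finite set, G a finite group, φ : G → Perm(V) a group homomorphism whose action is free (φ(g)(v) = v for some v implies g = 1), and R a binary relation on V that is G-invariant (for all g ∈ G and u, v ∈ V, R(φ(g)(u), φ(g)(v)) holds iff R(u,v) holds). Let Q denote the quotient of V by the orbit equivalence relation of this action, and for v ∈ V let [v] ∈ Q denote its orbit. Then there exist a G-voltage family Ã : G → (Q → Q → Prop) on Q and a bijection e : V ≃ Q × G such that: (i) for all v ∈ V, the first component e(v)₁ equals [v]; (ii) e is equivariant: for all g ∈ G and v ∈ V, e(φ(g)(v)) = (e(v)₁, g · e(v)₂); and (iii) for all u, v ∈ V, R(u,v) holds iff Ã((e(u)₂)⁻¹ · e(v)₂)(e(u)₁, e(v)₁) holds, i.e. e carries R to the derived relation of Ã on Q × G. -/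
/-- The orbit equivalence relation on `V` induced by a homomorphism `φ : G →* Equiv.Perm V`:
`u ≈ v` iff some group element moves `u` to `v`. -/
def orbitSetoid {V G : Type} [Group G] (φ : G →* Equiv.Perm V) : Setoid V where
  r u v := ∃ g : G, φ g u = v
  iseqv := by
    constructor
    · intro u
      exact ⟨1, by simp⟩
    · rintro u v ⟨g, rfl⟩
      refine ⟨g⁻¹, ?_⟩
      rw [← Equiv.Perm.mul_apply, ← map_mul, inv_mul_cancel, map_one, Equiv.Perm.one_apply]
    · rintro u v w ⟨g, rfl⟩ ⟨g', rfl⟩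
      refine ⟨g' * g, ?_⟩
      rw [map_mul, Equiv.Perm.mul_apply]

/-- **Gross–Tucker, constructive direction.** Given a free action `φ` of a finite group `G`
on a finite set `V` preserving the relation `R`, there is a `G`-voltage family on the orbit
space `Q = V / G` and a bijection `e : V ≃ Q × G` whose first component is the orbit map,
which is `G`-equivariant, and which carries `R` to the derived relation of the voltage
family. -/
theorem gross_tucker_quotient {V : Type} [Fintype V] {G : Type} [Group G] [Fintype G]
    (φ : G →* Equiv.Perm V)
    (hfree : ∀ (g : G) (v : V), φ g v = v → g = 1)
    (R : V → V → Prop)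
    (hinv : ∀ (g : G) (u v : V), R (φ g u) (φ g v) ↔ R u v) :
    ∃ (A : G → Quotient (orbitSetoid φ) → Quotient (orbitSetoid φ) → Prop)
      (e : V ≃ Quotient (orbitSetoid φ) × G),
      (∀ v : V, (e v).1 = Quotient.mk (orbitSetoid φ) v) ∧
      (∀ (g : G) (v : V), e (φ g v) = ((e v).1, g * (e v).2)) ∧
      (∀ u v : V, R u v ↔ A ((e u).2⁻¹ * (e v).2) (e u).1 (e v).1) := by
  classical
  -- uniqueness of transporting group element
  have huniq : ∀ (x : V) (g g' : G), φ g x = φ g' x → g = g' := by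
    intro x g g' h
    have : φ (g'⁻¹ * g) x = x := by
      rw [map_mul, Equiv.Perm.mul_apply, h, ← Equiv.Perm.mul_apply, ← map_mul,
        inv_mul_cancel, map_one, Equiv.Perm.one_apply]
    have := hfree _ _ this
    rwa [inv_mul_eq_one, eq_comm] at this
  have hex : ∀ v : V, ∃ g : G, φ g (Quotient.mk (orbitSetoid φ) v).out = v := fun v =>
    Quotient.mk_out (s := orbitSetoid φ) v
  set σ : V → G := fun v => (hex v).choose with hσdef
  have hσ : ∀ v : V, φ (σ v) (Quotient.mk (orbitSetoid φ) v).out = v := fun v =>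
    (hex v).choose_spec
  have hmk : ∀ (g : G) (v : V),
      Quotient.mk (orbitSetoid φ) (φ g v) = Quotient.mk (orbitSetoid φ) v := by
    intro g v
    apply Quotient.sound
    refine ⟨g⁻¹, ?_⟩
    rw [← Equiv.Perm.mul_apply, ← map_mul, inv_mul_cancel, map_one, Equiv.Perm.one_apply]
  have hσeq : ∀ (g : G) (v : V), σ (φ g v) = g * σ v := by
    intro g v
    apply huniq (Quotient.mk (orbitSetoid φ) v).out
    have h1 : φ (σ (φ g v)) (Quotient.mk (orbitSetoid φ) (φ g v)).out = φ g v := hσ _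
    rw [hmk g v] at h1
    rw [h1, map_mul, Equiv.Perm.mul_apply, hσ]
  refine ⟨fun g q q' => R q.out (φ g q'.out),
    { toFun := fun v => (Quotient.mk (orbitSetoid φ) v, σ v)
      invFun := fun p => φ p.2 p.1.out
      left_inv := fun v => hσ v
      right_inv := by
        rintro ⟨q, g⟩
        have hq : Quotient.mk (orbitSetoid φ) (φ g q.out) = q := by
          rw [hmk g q.out, Quotient.out_eq]
        refine Prod.ext hq ?_
        show σ (φ g q.out) = g
        have : σ q.out = 1 := by
          apply huniq q.out
          rw [map_one, Equiv.Perm.one_apply]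
          have := hσ q.out
          rwa [Quotient.out_eq] at this
        rw [hσeq, this, mul_one] }, ?_, ?_, ?_⟩
  · intro v; rfl
  · intro g v
    exact Prod.ext (hmk g v) (hσeq g v)
  · intro u v
    dsimp only [Equiv.coe_fn_mk]
    rw [← hinv (σ u) ((Quotient.mk (orbitSetoid φ) u).out)
        (φ ((σ u)⁻¹ * σ v) (Quotient.mk (orbitSetoid φ) v).out)]
    rw [hσ u, ← Equiv.Perm.mul_apply, ← map_mul, mul_inv_cancel_left, hσ v]
end

section
/- Let G be a finite abelian group with dual group Ĝ = Hom(G, ℂˣ) of characters, let B be a complex algebra, let α : G → Aut_ℂ(B) be an action of G on B by ℂ-algebra automorphisms, and suppose u : Ĝ → Bˣ is a family of invertible elements of B such that α_g(u_χ) = χ(g) · u_χ for all g ∈ G and χ ∈ Ĝ. Let B^α = {b ∈ B : α_g(b) = b for all g ∈ G} be the fixed-point subalgebra. Then every element b ∈ B admits a unique decomposition b = ∑_{χ ∈ Ĝ} b_χ · u_χ with b_χ ∈ B^α for every χ ∈ Ĝ; that is, there exists a unique function f : Ĝ → B with f(χ) ∈ B^α for all χ and b = ∑_{χ ∈ Ĝ}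 f(χ) · u_χ. -/
open Finset

/-- If a homomorphism `φ : H → ℂˣ` from a finite commutative group is nontrivial,
the sum of its values vanishes. -/
lemma landstad_aux_sum_eq_zero {H : Type*} [CommGroup H] [Fintype H]
    (φ : H →* ℂˣ) (hφ : ∃ a, φ a ≠ 1) : ∑ x : H, (φ x : ℂ) = 0 := by
  obtain ⟨a, ha⟩ := hφ
  have key : (φ a : ℂ) * ∑ x : H, (φ x : ℂ) = ∑ x : H, (φ x : ℂ) := by
    rw [Finset.mul_sum]
    refine Fintype.sum_equiv (Equiv.mulLeft a) _ _ fun x => ?_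
    rw [Equiv.coe_mulLeft, map_mul, Units.val_mul]
  have ha' : (φ a : ℂ) ≠ 1 := fun h => ha (Units.ext (h.trans Units.val_one.symm))
  have h0 : ((φ a : ℂ) - 1) * ∑ x : H, (φ x : ℂ) = 0 := by
    rw [sub_mul, key, one_mul, sub_self]
  rcases mul_eq_zero.mp h0 with h | h
  · exact (ha' (sub_eq_zero.mp h)).elim
  · exact h

/-- First orthogonality: a nontrivial character sums to zero over the group. -/
lemma landstad_aux_char_sum {G : Type*} [CommGroup G] [Fintype G]
    (χ : G →* ℂˣ) (hχ : χ ≠ 1) : ∑ g : G, (χ g : ℂ) = 0 := by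
  refine landstad_aux_sum_eq_zero χ ?_
  by_contra h
  push_neg at h
  exact hχ (MonoidHom.ext fun g => h g)

/-- Second orthogonality: for `g ≠ 1`, the sum over all characters of `χ g` vanishes. -/
lemma landstad_aux_dual_sum {G : Type*} [CommGroup G] [Fintype G] [Fintype (G →* ℂˣ)]
    (g : G) (hg : g ≠ 1) : ∑ χ : G →* ℂˣ, (χ g : ℂ) = 0 := by
  have : NeZero (Monoid.exponent G) := ⟨Monoid.exponent_ne_zero_of_finite⟩
  obtain ⟨φ, hφ⟩ := CommGroup.exists_apply_ne_one_of_hasEnoughRootsOfUnity G ℂ hg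
  exact landstad_aux_sum_eq_zero (MonoidHom.eval g) ⟨φ, hφ⟩

/-- The dual group of a finite abelian group has the same cardinality. -/
lemma landstad_aux_card_dual {G : Type*} [CommGroup G] [Fintype G] [Fintype (G →* ℂˣ)] :
    Fintype.card (G →* ℂˣ) = Fintype.card G := by
  have : NeZero (Monoid.exponent G) := ⟨Monoid.exponent_ne_zero_of_finite⟩
  obtain ⟨e⟩ := CommGroup.monoidHom_mulEquiv_of_hasEnoughRootsOfUnity G ℂ
  exact Fintype.card_congr e.toEquiv

/-- **Linear-algebraic core of Landstad duality.** Let `G` be a finite abelian group with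
dual group `Ĝ = (G →* ℂˣ)`, let `B` be a complex algebra with an action
`α : G →* (B ≃ₐ[ℂ] B)` by algebra automorphisms, and let `u : Ĝ → Bˣ` be a family of
invertible elements with `α g (u χ) = χ g • u χ`. Then every `b : B` decomposes uniquely
as `b = ∑ χ, f χ * u χ` with all coefficients `f χ` in the fixed-point subalgebra `B^α`. -/
theorem landstad_spectral_decomposition {G : Type} [CommGroup G] [Fintype G]
    [Fintype (G →* ℂˣ)] {B : Type} [Ring B] [Algebra ℂ B]
    (α : G →* (B ≃ₐ[ℂ] B))
    (u : (G →* ℂˣ) → Bˣ)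
    (hu : ∀ (g : G) (χ : G →* ℂˣ), α g (u χ : B) = (χ g : ℂ) • (u χ : B)) :
    ∀ b : B, ∃! f : (G →* ℂˣ) → B,
      (∀ (χ : G →* ℂˣ) (g : G), α g (f χ) = f χ) ∧
      b = ∑ χ : G →* ℂˣ, f χ * (u χ : B) := by
  intro b
  classical
  set N : ℂ := (Fintype.card G : ℂ) with hN
  have hN0 : N ≠ 0 := Nat.cast_ne_zero.mpr Fintype.card_ne_zero
  -- the spectral projections
  set P : (G →* ℂˣ) → B → B := fun χ x => N⁻¹ • ∑ g : G, ((χ g : ℂ))⁻¹ • α g x with hP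
  -- composition law
  have hcomp : ∀ (h g : G) (x : B), α h (α g x) = α (h * g) x := by
    intro h g x
    rw [map_mul]
    rfl
  -- equivariance of P
  have hPeq : ∀ (χ : G →* ℂˣ) (h : G) (x : B), α h (P χ x) = (χ h : ℂ) • P χ x := by
    intro χ h x
    simp only [hP, map_smul, map_sum]
    rw [smul_comm]
    congr 1
    rw [Finset.smul_sum]
    refine Fintype.sum_equiv (Equiv.mulLeft h) _ _ fun g => ?_
    simp only [Equiv.coe_mulLeft]
    rw [hcomp, smul_smul]
    congr 1
    have hm : (χ (h * g) : ℂ) = (χ h : ℂ) * (χ g : ℂ) := by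
      rw [map_mul, Units.val_mul]
    rw [hm, mul_inv, ← mul_assoc, mul_inv_cancel₀ (Units.ne_zero (χ h)), one_mul]
  -- P applied to an eigenvector
  have hPeig : ∀ (χ ψ : G →* ℂˣ) (x : B), (∀ g : G, α g x = (ψ g : ℂ) • x) →
      P χ x = if χ = ψ then x else 0 := by
    intro χ ψ x hx
    simp only [hP]
    have hterm : ∀ g : G, ((χ g : ℂ))⁻¹ • α g x = (((ψ * χ⁻¹) g : ℂ)) • x := by
      intro g
      rw [hx g, ← smul_assoc, smul_eq_mul]
      congr 1
      rw [MonoidHom.mul_apply, MonoidHom.inv_apply, Units.val_mul, Units.val_inv_eq_inv_val,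
        mul_comm]
    simp only [hterm, ← Finset.sum_smul]
    by_cases hcase : χ = ψ
    · subst hcase
      have h1 : χ * χ⁻¹ = 1 := mul_inv_cancel χ
      rw [h1, if_pos rfl]
      simp only [MonoidHom.one_apply, Units.val_one]
      rw [Finset.sum_const, Finset.card_univ, nsmul_eq_mul, mul_one, smul_smul,
        ← hN, inv_mul_cancel₀ hN0, one_smul]
    · have hne : ψ * χ⁻¹ ≠ 1 := by
        intro hcontr
        exact hcase ((mul_eq_one_iff_eq_inv.mp hcontr).trans (inv_inv χ)).symm
      rw [landstad_aux_char_sum _ hne, if_neg hcase, zero_smul, smul_zero]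
  -- P sums to the identity
  have hPsum : ∀ x : B, ∑ χ : G →* ℂˣ, P χ x = x := by
    intro x
    simp only [hP, ← Finset.smul_sum]
    rw [Finset.sum_comm]
    have hterm : ∀ g : G, ∑ χ : G →* ℂˣ, ((χ g : ℂ))⁻¹ • α g x
        = (∑ χ : G →* ℂˣ, (χ g⁻¹ : ℂ)) • α g x := by
      intro g
      rw [Finset.sum_smul]
      refine Finset.sum_congr rfl fun χ _ => ?_
      rw [map_inv, Units.val_inv_eq_inv_val]
    have horth : ∀ g : G, (∑ χ : G →* ℂˣ, (χ g⁻¹ : ℂ)) = if g = 1 then N else 0 := by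
      intro g
      by_cases hg : g = 1
      · subst hg
        simp only [inv_one, map_one, Units.val_one, Finset.sum_const, Finset.card_univ,
          nsmul_eq_mul, mul_one, if_pos rfl]
        rw [landstad_aux_card_dual, hN, if_true]
      · rw [landstad_aux_dual_sum g⁻¹ (by simpa using hg), if_neg hg]
    simp only [hterm, horth, ite_smul, zero_smul]
    rw [Finset.sum_ite_eq' Finset.univ (1 : G) (fun g => N • α g x)]
    simp only [Finset.mem_univ, if_pos, map_one]
    rw [smul_smul, inv_mul_cancel₀ hN0, one_smul]
    rfl
  -- α g of the inverse units
  have huinv : ∀ (g : G) (χ : G →* ℂˣ),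
      α g (((u χ)⁻¹ : Bˣ) : B) = ((χ g : ℂ))⁻¹ • (((u χ)⁻¹ : Bˣ) : B) := by
    intro g χ
    have h1 : (α g (((u χ)⁻¹ : Bˣ) : B)) * (α g (u χ : B)) = 1 := by
      rw [← map_mul, Units.inv_mul, map_one]
    have h2 : (α g (u χ : B)) * (((χ g : ℂ))⁻¹ • (((u χ)⁻¹ : Bˣ) : B)) = 1 := by
      rw [hu, smul_mul_smul, mul_inv_cancel₀ (Units.ne_zero (χ g)), Units.mul_inv, one_smul]
    calc α g (((u χ)⁻¹ : Bˣ) : B)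
        = α g (((u χ)⁻¹ : Bˣ) : B) *
            ((α g (u χ : B)) * (((χ g : ℂ))⁻¹ • (((u χ)⁻¹ : Bˣ) : B))) := by
          rw [h2, mul_one]
      _ = (α g (((u χ)⁻¹ : Bˣ) : B) * α g (u χ : B)) *
            (((χ g : ℂ))⁻¹ • (((u χ)⁻¹ : Bˣ) : B)) := by rw [mul_assoc]
      _ = ((χ g : ℂ))⁻¹ • (((u χ)⁻¹ : Bˣ) : B) := by rw [h1, one_mul]
  -- linearity of P
  have hPlin : ∀ (χ : G →* ℂˣ) (t : (G →* ℂˣ) → B),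
      P χ (∑ ψ : G →* ℂˣ, t ψ) = ∑ ψ : G →* ℂˣ, P χ (t ψ) := by
    intro χ t
    simp only [hP, map_sum, Finset.smul_sum]
    exact Finset.sum_comm
  -- any solution is the canonical one
  have hchar : ∀ f : (G →* ℂˣ) → B,
      ((∀ (χ : G →* ℂˣ) (g : G), α g (f χ) = f χ) ∧
        b = ∑ χ : G →* ℂˣ, f χ * (u χ : B)) →
      f = fun χ => P χ b * (((u χ)⁻¹ : Bˣ) : B) := by
    rintro f ⟨hf, hb⟩
    funext χ
    have heig : ∀ (ψ : G →* ℂˣ) (g : G),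
        α g (f ψ * (u ψ : B)) = (ψ g : ℂ) • (f ψ * (u ψ : B)) := by
      intro ψ g
      rw [map_mul, hf, hu, mul_smul_comm]
    have hPb : P χ b = f χ * (u χ : B) := by
      rw [hb, hPlin]
      have : ∀ ψ : G →* ℂˣ, P χ (f ψ * (u ψ : B)) =
          if χ = ψ then f ψ * (u ψ : B) else 0 := fun ψ => hPeig χ ψ _ (heig ψ)
      simp only [this]
      rw [Finset.sum_ite_eq Finset.univ χ (fun ψ => f ψ * (u ψ : B))]
      simp
    rw [hPb, mul_assoc, Units.mul_inv, mul_one]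
  refine ⟨fun χ => P χ b * (((u χ)⁻¹ : Bˣ) : B), ⟨?_, ?_⟩, ?_⟩
  · intro χ g
    rw [map_mul, hPeq, huinv, smul_mul_smul, mul_inv_cancel₀ (Units.ne_zero (χ g)), one_smul]
  · have : ∀ χ : G →* ℂˣ, P χ b * (((u χ)⁻¹ : Bˣ) : B) * (u χ : B) = P χ b := by
      intro χ
      rw [mul_assoc, Units.inv_mul, mul_one]
    simp only [this]
    exact (hPsum b).symm
  · intro f hf
    exact hchar f hf
end

section
/- Let G be a finite abelian group acting on a finite set V. Then the action is free (i.e. g • v = v for some v ∈ V implies g = 1) if and only if there exists a family u assigning to every character χ ∈ Ĝ = Hom(G, ℂˣ) a function u_χ : V → ℂˣ such that: (i) u is multiplicative in χ, i.e. u_{χ·χ'}(v) = u_χ(v) · u_{χ'}(v) for all χ, χ' ∈ Ĝ and v ∈ V; and (ii) u_χ(g • v) = χ(g) · u_χ(v) for all χ ∈ Ĝ, g ∈ G and v ∈ V. -/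
/-- **Landstad's condition = freeness for classical finite sets.** An action of a finite
abelian group `G` on a finite set `V` is free if and only if there is a family `u`
assigning to each character `χ : G →* ℂˣ` a function `u χ : V → ℂˣ` which is
multiplicative in `χ` and satisfies `u χ (g • v) = χ g * u χ v`, i.e. a unitary
representation of the dual group inside the function algebra on `V`. -/
theorem free_action_iff_dual_representation {G V : Type} [CommGroup G] [Fintype G]
    [Fintype V] [MulAction G V] :
    (∀ (g : G) (v : V), g • v = v → g = 1) ↔
    ∃ u : (G →* ℂˣ) → V → ℂˣ,
      (∀ (χ χ' : G →* ℂˣ) (v : V), u (χ * χ') v = u χ v * u χ' v) ∧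
      (∀ (χ : G →* ℂˣ) (g : G) (v : V), u χ (g • v) = χ g * u χ v) := by
  constructor
  · intro hfree
    -- representative of the orbit of `v`
    let r : V → V := fun v => (Quotient.mk (MulAction.orbitRel G V) v).out
    have hr : ∀ v : V, ∃ g : G, g • r v = v := by
      intro v
      have h := Quotient.exact
        (Quotient.out_eq (Quotient.mk (MulAction.orbitRel G V) v))
      obtain ⟨g, hg⟩ := h
      refine ⟨g⁻¹, ?_⟩
      show g⁻¹ • (Quotient.mk (MulAction.orbitRel G V) v).out = v
      rw [← hg]; simp
    have hrinv : ∀ (g : G) (v : V), r (g • v) = r v := by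
      intro g v
      have : (Quotient.mk (MulAction.orbitRel G V) (g • v)) =
          (Quotient.mk (MulAction.orbitRel G V) v) :=
        Quotient.sound ⟨g, rfl⟩
      simp only [r, this]
    -- the unique group element carrying the representative to `v`
    let c : V → G := fun v => (hr v).choose
    have hc : ∀ v : V, c v • r v = v := fun v => (hr v).choose_spec
    have hcg : ∀ (g : G) (v : V), c (g • v) = g * c v := by
      intro g v
      have h1 : c (g • v) • r v = g • v := by
        have := hc (g • v); rwa [hrinv] at this
      have h2 : (g * c v) • r v = g • v := by rw [mul_smul, hc]
      have h3 : ((g * c v)⁻¹ * c (g • v)) • r v = r v := by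
        rw [mul_smul, h1, ← h2, inv_smul_smul]
      have := hfree _ _ h3
      rw [inv_mul_eq_one] at this
      exact this.symm
    refine ⟨fun χ v => χ (c v), ?_, ?_⟩
    · intro χ χ' v; rfl
    · intro χ g v; show χ (c (g • v)) = χ g * χ (c v); rw [hcg, map_mul]
  · rintro ⟨u, _, hcov⟩ g v hgv
    by_contra hg
    obtain ⟨χ, hχ⟩ := CommGroup.exists_apply_ne_one_of_hasEnoughRootsOfUnity G ℂ hg
    have := hcov χ g v
    rw [hgv] at this
    exact hχ (right_eq_mul.mp this)
end
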